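/- Let p be a prime, let R be a commutative ring of characteristic p, and let ∂ = (∂_n)_{n ∈ ℕ} be an HS-derivation on R whose components commute pairwise (∂_i ∘ ∂_j = ∂_j ∘ ∂_i for all i, j). Then for every n ∈ ℕ and every r ∈ R, the sum Σ_{(i_1,…,i_p) ∈ ℕ^p, i_1+⋯+i_p = n} (∂_{i_1} ∘ ∂_{i_2} ∘ ⋯ ∘ ∂_{i_p})(r) equals ∂_{n/p}^{(p)}(r) if p divides n, and equals 0 otherwise. -/

import Mathlib

open Finset Function
open Fin.NatCast

/-- `D` is a Hasse-Schmidt derivation on `R`. -/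
def IsHSDeriv {R : Type*} [CommRing R] (D : ℕ → R → R) : Prop :=
  (∀ n x y, D n (x + y) = D n x + D n y) ∧
  (∀ x, D 0 x = x) ∧
  (∀ n x y, D n (x * y) = ∑ ij ∈ Finset.HasAntidiagonal.antidiagonal n, D ij.1 x * D ij.2 y)

/-- The composition `D i₁ ∘ D i₂ ∘ ⋯ ∘ D iₖ` for a list of indices `[i₁, …, iₖ]`. -/
def compList {R : Type*} (D : ℕ → R → R) : List ℕ → R → R
  | [] => id
  | n :: ns => D n ∘ compList D ns

lemma compList_perm {R : Type*} (D : ℕ → R → R)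
    (hcomm : ∀ i j, D i ∘ D j = D j ∘ D i)
    {l₁ l₂ : List ℕ} (h : l₁.Perm l₂) : compList D l₁ = compList D l₂ := by
  induction h with
  | nil => rfl
  | cons x _ ih => simp only [compList, ih]
  | swap x y l =>
      show D y ∘ (D x ∘ compList D l) = D x ∘ (D y ∘ compList D l)
      rw [← Function.comp_assoc, hcomm, Function.comp_assoc]
  | trans _ _ ih1 ih2 => rw [ih1, ih2]

lemma compList_replicate {R : Type*} (D : ℕ → R → R) (k c : ℕ) :
    compList D (List.replicate k c) = (D c)^[k] := by
  induction k with
  | zero => rfl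
  | succ k ih =>
      rw [List.replicate_succ]
      show D c ∘ _ = _
      rw [ih, ← Function.iterate_succ' (D c)]

lemma ofFn_perm {α : Type*} {k : ℕ} (v : Fin k → α) (e : Equiv.Perm (Fin k)) :
    (List.ofFn (v ∘ e)).Perm (List.ofFn v) := by
  rw [List.ofFn_eq_map, List.ofFn_eq_map, ← List.map_map]
  refine List.Perm.map v ?_
  apply List.Perm.symm
  apply List.perm_of_nodup_nodup_toFinset_eq (List.nodup_finRange k)
    ((List.nodup_finRange k).map e.injective)
  ext i
  simp [List.mem_map]
  exact ⟨e.symm i, by simp⟩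

section Rot
variable {p : ℕ} [NeZero p]

/-- cyclic rotation of a tuple -/
def rot (v : Fin p → ℕ) : Fin p → ℕ := fun i => v (i + 1)

lemma rot_iterate (k : ℕ) (v : Fin p → ℕ) (i : Fin p) :
    rot^[k] v i = v (i + (k : Fin p)) := by
  induction k generalizing v i with
  | zero => simp
  | succ k ih =>
      rw [Function.iterate_succ_apply, ih]
      show v (i + (k : Fin p) + 1) = _
      rw [Nat.cast_add, Nat.cast_one, add_assoc]

lemma rot_p (v : Fin p → ℕ) : rot^[p] v = v := by
  funext i; rw [rot_iterate, Fin.natCast_self, add_zero]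

lemma rot_mod (k : ℕ) (v : Fin p → ℕ) : rot^[k] v = rot^[k % p] v := by
  funext i
  rw [rot_iterate, rot_iterate]
  congr 1
  rw [show ((k : ℕ) : Fin p) = ((k % p : ℕ) : Fin p) from ?_]
  conv_lhs => rw [← Nat.mod_add_div k p]
  push_cast
  simp [Fin.natCast_self]

lemma rot_sum (k : ℕ) (v : Fin p → ℕ) : ∑ i, rot^[k] v i = ∑ i, v i := by
  simp only [rot_iterate]
  exact Equiv.sum_comp (Equiv.addRight ((k : Fin p))) v

/-- if `v` is fixed by a rotation by `k` with `¬ p ∣ k` and `p` prime, `v` is constant -/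
lemma rot_const (hp : p.Prime) {k : ℕ} {v : Fin p → ℕ}
    (hfix : rot^[k] v = v) (hk : ¬ p ∣ k) (j : Fin p) : v j = v 0 := by
  have hd : rot^[k % p] v = v := (rot_mod k v) ▸ hfix
  have hco : Nat.Coprime (k % p) p := by
    refine ((Nat.Prime.coprime_iff_not_dvd hp).2 ?_).symm
    intro h
    exact hk (Nat.dvd_of_mod_eq_zero
      (Nat.eq_zero_of_dvd_of_lt h (Nat.mod_lt _ (NeZero.pos p))))
  obtain ⟨m, -, hm⟩ := Nat.exists_mul_mod_eq_one_of_coprime hco hp.one_lt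
  have h1 : rot^[1] v = v := by
    have : rot^[(k % p) * m] v = v := by
      rw [Function.iterate_mul]
      exact Function.iterate_fixed hd m
    rw [rot_mod, hm] at this
    exact this
  have hall : ∀ m : ℕ, rot^[m] v = v := fun m => by
    simpa using Function.iterate_fixed h1 m
  have := congrFun (hall j.val) 0
  rw [rot_iterate, zero_add, Fin.cast_val_eq_self] at this
  exact this

/-- constancy transfers back along rotation -/
lemma const_of_rot_const (k : ℕ) {v : Fin p → ℕ}
    (h : ∀ j, rot^[k] v j = rot^[k] v 0) (j : Fin p) : v j = v 0 := by
  have key : ∀ i : Fin p, v i = rot^[k] v (i - (k : Fin p)) := by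
    intro i; rw [rot_iterate, sub_add_cancel]
  rw [key j, key 0, h (j - (k : Fin p)), h (0 - (k : Fin p))]

/-- the rotation orbit of a tuple -/
def orb (v : Fin p → ℕ) : Finset (Fin p → ℕ) :=
  (Finset.range p).image (fun k => rot^[k] v)

lemma mem_orb {v w : Fin p → ℕ} : w ∈ orb v ↔ ∃ k : ℕ, w = rot^[k] v := by
  simp only [orb, Finset.mem_image, Finset.mem_range]
  constructor
  · rintro ⟨k, _, rfl⟩; exact ⟨k, rfl⟩
  · rintro ⟨k, rfl⟩
    exact ⟨k % p, Nat.mod_lt _ (NeZero.pos p), (rot_mod k v).symm⟩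

lemma self_mem_orb (v : Fin p → ℕ) : v ∈ orb v := mem_orb.2 ⟨0, rfl⟩

lemma orb_rot (j : ℕ) (v : Fin p → ℕ) : orb (rot^[j] v) = orb v := by
  ext w
  rw [mem_orb, mem_orb]
  constructor
  · rintro ⟨k, rfl⟩
    exact ⟨k + j, by rw [Function.iterate_add_apply]⟩
  · rintro ⟨k, rfl⟩
    refine ⟨k + j * (p - 1), ?_⟩
    rw [← Function.iterate_add_apply]
    have heq : k + j * (p - 1) + j = k + j * p := by
      have h1 : 0 < p := NeZero.pos p
      calc k + j * (p - 1) + j = k + (j * (p - 1) + j) := by ring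
        _ = k + j * ((p - 1) + 1) := by rw [Nat.mul_succ]
        _ = k + j * p := by rw [show p - 1 + 1 = p by omega]
    rw [heq, rot_mod (k + j * p), Nat.add_mul_mod_self_right, ← rot_mod]

lemma orb_eq_of_mem {v w : Fin p → ℕ} (h : w ∈ orb v) : orb w = orb v := by
  obtain ⟨k, rfl⟩ := mem_orb.1 h
  exact orb_rot k v

lemma card_orb (hp : p.Prime) {v : Fin p → ℕ} (hv : ¬ ∀ j, v j = v 0) :
    (orb v).card = p := by
  rw [orb, Finset.card_image_of_injOn, Finset.card_range]
  have aux : ∀ a b : ℕ, a < b → b < p → rot^[a] v = rot^[b] v → False := by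
    intro a b hlt hb' hab
    have hba : rot^[b - a] (rot^[a] v) = rot^[a] v := by
      rw [← Function.iterate_add_apply]
      rw [Nat.sub_add_cancel hlt.le]
      exact hab.symm
    have hnd : ¬ p ∣ (b - a) := by
      intro hd
      have := Nat.eq_zero_of_dvd_of_lt hd (by omega)
      omega
    have hconst : ∀ j, rot^[a] v j = rot^[a] v 0 := rot_const hp hba hnd
    exact hv (const_of_rot_const a hconst)
  intro a ha b hb hab
  have ha' : a < p := by simpa using ha
  have hb' : b < p := by simpa using hb
  rcases lt_trichotomy a b with h | h | h
  · exact absurd (aux a b h hb' hab) not_false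
  · exact h
  · exact absurd (aux b a h ha' hab.symm) not_false

end Rot

/-- For an HS-derivation with pairwise commuting components, on a ring of characteristic
`p`, the sum `Σ_{i₁+⋯+i_p = n} D i₁ ∘ ⋯ ∘ D i_p` equals `(D (n/p))^{(p)}` if `p ∣ n`
and `0` otherwise. -/
theorem sum_comp_p_fold (p : ℕ) (hp : p.Prime)
    (R : Type*) [CommRing R] [CharP R p]
    (D : ℕ → R → R)
    (hD : IsHSDeriv D)
    (hcomm : ∀ i j : ℕ, D i ∘ D j = D j ∘ D i)
    (n : ℕ) (r : R) :
    ∑ v ∈ Finset.Nat.antidiagonalTuple p n, compList D (List.ofFn v) r =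
      if p ∣ n then (D (n / p))^[p] r else 0 := by
  haveI : NeZero p := ⟨hp.pos.ne'⟩
  classical
  set T := Finset.Nat.antidiagonalTuple p n with hT
  set g : (Fin p → ℕ) → R := fun v => compList D (List.ofFn v) r with hg
  -- g is invariant under rotation
  have hg_rot : ∀ (k : ℕ) (v : Fin p → ℕ), g (rot^[k] v) = g v := by
    intro k v
    have hv : rot^[k] v = v ∘ (Equiv.addRight ((k : Fin p))) := by
      funext i; rw [rot_iterate]; rfl
    show compList D (List.ofFn (rot^[k] v)) r = compList D (List.ofFn v) r
    rw [hv]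
    exact congrFun (compList_perm D hcomm (ofFn_perm v _)) r
  -- T is invariant under rotation
  have hT_rot : ∀ (k : ℕ) (v : Fin p → ℕ), v ∈ T → rot^[k] v ∈ T := by
    intro k v hv
    rw [hT, Finset.Nat.mem_antidiagonalTuple] at *
    rw [rot_sum]; exact hv
  set Cst : (Fin p → ℕ) → Prop := fun v => ∀ j, v j = v 0 with hCst
  -- constancy is invariant under rotation
  have hC_rot : ∀ (k : ℕ) (v : Fin p → ℕ), Cst v → Cst (rot^[k] v) := by
    intro k v hv j
    rw [rot_iterate, rot_iterate, hv (j + (k : Fin p)), hv (0 + (k : Fin p))]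
  set S := T.filter (fun v => ¬ Cst v) with hS
  -- orbits of elements of S stay in S
  have horbS : ∀ v ∈ S, ∀ w ∈ orb v, w ∈ S := by
    intro v hv w hw
    obtain ⟨k, rfl⟩ := mem_orb.1 hw
    rw [hS, Finset.mem_filter] at hv ⊢
    refine ⟨hT_rot k v hv.1, fun hc => hv.2 (const_of_rot_const k hc)⟩
  -- the sum over non-constant tuples vanishes
  have key : ∑ v ∈ S, g v = 0 := by
    letI : LinearOrder (Fin p → ℕ) := LinearOrder.lift' List.ofFn List.ofFn_injective
    have hne : ∀ v : Fin p → ℕ, (orb v).Nonempty := fun v => ⟨v, self_mem_orb v⟩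
    set rep : (Fin p → ℕ) → (Fin p → ℕ) := fun v => (orb v).min' (hne v) with hrep
    have hrep_mem : ∀ v, rep v ∈ orb v := fun v => Finset.min'_mem _ _
    have hrep_orb : ∀ v w, w ∈ orb v → rep w = rep v := by
      intro v w hw
      simp only [hrep, orb_eq_of_mem hw]
    have hmaps : ∀ v ∈ S, rep v ∈ S := fun v hv => horbS v hv _ (hrep_mem v)
    rw [← Finset.sum_fiberwise_of_maps_to hmaps g]
    apply Finset.sum_eq_zero
    intro b hb
    by_cases hbb : rep b = b
    · have hfib : S.filter (fun v => rep v = b) = orb b := by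
        ext w
        simp only [Finset.mem_filter]
        constructor
        · rintro ⟨hwS, hwrep⟩
          have hbm : b ∈ orb w := hwrep ▸ hrep_mem w
          rw [orb_eq_of_mem hbm]; exact self_mem_orb w
        · intro hw
          exact ⟨horbS b hb w hw, by rw [hrep_orb b w hw, hbb]⟩
      have hbnc : ¬ ∀ j, b j = b 0 := by
        have := hb
        rw [hS, Finset.mem_filter] at this
        exact this.2
      have hgc : ∀ w ∈ orb b, g w = g b := by
        intro w hw
        obtain ⟨k, rfl⟩ := mem_orb.1 hw
        exact hg_rot k b
      rw [hfib, Finset.sum_congr rfl hgc, Finset.sum_const, card_orb hp hbnc,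
        nsmul_eq_mul, CharP.cast_eq_zero R p, zero_mul]
    · apply Finset.sum_eq_zero
      intro w hw
      exfalso
      apply hbb
      rw [Finset.mem_filter] at hw
      have hbm : b ∈ orb w := hw.2 ▸ hrep_mem w
      rw [hrep_orb w b hbm]
      exact hw.2
  -- decompose the sum
  have hdecomp : ∑ v ∈ T, g v = ∑ v ∈ T.filter Cst, g v := by
    rw [← Finset.sum_filter_add_sum_filter_not T Cst g, ← hS, key, add_zero]
  show ∑ v ∈ T, g v = _
  rw [hdecomp]
  by_cases hdvd : p ∣ n
  · rw [if_pos hdvd]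
    have hF : T.filter Cst = {fun _ => n / p} := by
      ext v
      rw [Finset.mem_filter, Finset.mem_singleton, hT, Finset.Nat.mem_antidiagonalTuple]
      constructor
      · rintro ⟨hsum, hc⟩
        have : ∑ _i : Fin p, v 0 = n := by
          rw [← hsum]; exact Finset.sum_congr rfl (fun i _ => (hc i).symm)
        rw [Finset.sum_const, Finset.card_univ, Fintype.card_fin, smul_eq_mul] at this
        have hv0 : v 0 = n / p := by rw [← this, Nat.mul_div_cancel_left _ hp.pos]
        funext i
        rw [hc i, hv0]
      · rintro rfl
        refine ⟨?_, fun j => rfl⟩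
        rw [Finset.sum_const, Finset.card_univ, Fintype.card_fin, smul_eq_mul]
        exact Nat.mul_div_cancel' hdvd
    rw [hF, Finset.sum_singleton]
    show compList D (List.ofFn (fun _ => n / p)) r = _
    rw [List.ofFn_const, compList_replicate]
  · rw [if_neg hdvd]
    have hF : T.filter Cst = ∅ := by
      rw [Finset.filter_eq_empty_iff]
      intro v hv hc
      rw [hT, Finset.Nat.mem_antidiagonalTuple] at hv
      apply hdvd
      have : ∑ _i : Fin p, v 0 = n := by
        rw [← hv]; exact Finset.sum_congr rfl (fun i _ => (hc i).symm)
      rw [Finset.sum_const, Finset.card_univ, Fintype.card_fin, smul_eq_mul] at this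
      exact ⟨v 0, this.symm⟩
    rw [hF, Finset.sum_empty]
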